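/- Let H be the complete bipartite graph K_{2,4} and let G be obtained from H by subdividing every edge exactly ℓ - 1 times, for an integer ℓ ≥ 1. Then G is 2-connected, has n = 8ℓ - 2 vertices, and pe(G) = ℓ = (n+2)/8. -/

import Mathlib

open SimpleGraph

variable {V : Type*} [Fintype V] [DecidableEq V]

/-- Distance from a vertex `u` to the vertex set of a walk `P`. -/
noncomputable def walkDist (G : SimpleGraph V) {a b : V} (P : G.Walk a b) (u : V) : ℕ :=
  P.support.toFinset.inf' ⟨a, List.mem_toFinset.mpr P.start_mem_support⟩ (fun x => G.dist u x)

/-- Eccentricity of a walk: max distance from any vertex of `G` to the walk. -/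
noncomputable def eccW (G : SimpleGraph V) {a b : V} (P : G.Walk a b) : ℕ :=
  Finset.univ.sup (walkDist G P)

/-- Path eccentricity of a graph. -/
noncomputable def pe (G : SimpleGraph V) : ℕ :=
  sInf {m | ∃ (a b : V) (P : G.Walk a b), P.IsPath ∧ eccW G P = m}

/-- `P` is a longest path in `G`. -/
def IsLongestPath (G : SimpleGraph V) {a b : V} (P : G.Walk a b) : Prop :=
  P.IsPath ∧ ∀ (c d : V) (Q : G.Walk c d), Q.IsPath → Q.length ≤ P.length

/-- `G` is `k`-connected. -/
def KConnected (k : ℕ) (G : SimpleGraph V) : Prop :=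
  k + 1 ≤ Fintype.card V ∧
    ∀ S : Finset V, S.card < k → (G.induce ((↑S : Set V)ᶜ)).Connected

/-- Adjacency relation of the graph obtained from `K_{2,4}` (parts `Fin 2` and `Fin 4`)
by subdividing every edge exactly `ℓ - 1` times: the edge between `a : Fin 2` and
`b : Fin 4` is replaced by the path `a, (a,b,0), …, (a,b,ℓ-2), b`
(when `ℓ = 1` it is kept as a direct edge). -/
def subdivK24Rel (ℓ : ℕ) :
    (Fin 2 ⊕ Fin 4) ⊕ (Fin 2 × Fin 4 × Fin (ℓ - 1)) →
    (Fin 2 ⊕ Fin 4) ⊕ (Fin 2 × Fin 4 × Fin (ℓ - 1)) → Prop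
  | Sum.inl (Sum.inl _), Sum.inl (Sum.inr _) => ℓ = 1
  | Sum.inl (Sum.inl a), Sum.inr (a', _, j) => a = a' ∧ j.val = 0
  | Sum.inl (Sum.inr b), Sum.inr (_, b', j) => b = b' ∧ j.val + 1 = ℓ - 1
  | Sum.inr (a, b, j), Sum.inr (a', b', j') => a = a' ∧ b = b' ∧ j'.val = j.val + 1
  | _, _ => False

namespace K24

abbrev VV (ℓ : ℕ) := (Fin 2 ⊕ Fin 4) ⊕ (Fin 2 × Fin 4 × Fin (ℓ - 1))
abbrev GG (ℓ : ℕ) : SimpleGraph (VV ℓ) := SimpleGraph.fromRel (subdivK24Rel ℓ)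

def vX (ℓ : ℕ) (a : Fin 2) : VV ℓ := Sum.inl (Sum.inl a)
def vY (ℓ : ℕ) (b : Fin 4) : VV ℓ := Sum.inl (Sum.inr b)
def vZ (ℓ : ℕ) (a : Fin 2) (b : Fin 4) (j : Fin (ℓ-1)) : VV ℓ := Sum.inr (a, b, j)

variable {ℓ : ℕ}

lemma adj_XY (h : ℓ = 1) (a : Fin 2) (b : Fin 4) : (GG ℓ).Adj (vX ℓ a) (vY ℓ b) := by
  rw [SimpleGraph.fromRel_adj]
  exact ⟨by simp [vX, vY], Or.inl h⟩

lemma adj_XZ (a : Fin 2) (b : Fin 4) (j : Fin (ℓ-1)) (hj : j.val = 0) :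
    (GG ℓ).Adj (vX ℓ a) (vZ ℓ a b j) := by
  rw [SimpleGraph.fromRel_adj]
  exact ⟨by simp [vX, vZ], Or.inl ⟨rfl, hj⟩⟩

lemma adj_ZY (a : Fin 2) (b : Fin 4) (j : Fin (ℓ-1)) (hj : j.val + 1 = ℓ - 1) :
    (GG ℓ).Adj (vZ ℓ a b j) (vY ℓ b) := by
  rw [SimpleGraph.fromRel_adj]
  exact ⟨by simp [vY, vZ], Or.inr ⟨rfl, hj⟩⟩

lemma adj_ZZ (a : Fin 2) (b : Fin 4) (j j' : Fin (ℓ-1)) (hj : j'.val = j.val + 1) :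
    (GG ℓ).Adj (vZ ℓ a b j) (vZ ℓ a b j') := by
  rw [SimpleGraph.fromRel_adj]
  refine ⟨?_, Or.inl ⟨rfl, rfl, hj⟩⟩
  simp only [vZ, ne_eq, Sum.inr.injEq, Prod.mk.injEq]
  rintro ⟨-, -, h⟩; rw [h] at hj; omega

/-- distance-like potential to `vY b`. -/
def fB (ℓ : ℕ) (b : Fin 4) : VV ℓ → ℕ
  | Sum.inl (Sum.inl _) => ℓ
  | Sum.inl (Sum.inr b') => if b' = b then 0 else ℓ
  | Sum.inr (_, b', j) => if b' = b then ℓ - 1 - j.val else ℓ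

lemma fB_le (b : Fin 4) (v : VV ℓ) : fB ℓ b v ≤ ℓ := by
  rcases v with (a | b') | ⟨a, b', j⟩ <;> simp [fB] <;> split <;> omega

lemma fB_lip {u v : VV ℓ} (b : Fin 4) (h : (GG ℓ).Adj u v) : fB ℓ b v ≤ fB ℓ b u + 1 := by
  rw [SimpleGraph.fromRel_adj] at h
  obtain ⟨hne, h | h⟩ := h <;>
  · rcases u with (a | b') | ⟨a, b', j⟩ <;> rcases v with (a2 | b2) | ⟨a2, b2, j2⟩ <;>
      simp_all [subdivK24Rel, fB] <;>
      (try split) <;> (try split) <;>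
      (try have := j.isLt) <;> (try have := j2.isLt) <;> omega

lemma fB_walk {b : Fin 4} {u v : VV ℓ} (W : (GG ℓ).Walk u v) :
    fB ℓ b v ≤ fB ℓ b u + W.length := by
  induction W with
  | nil => simp
  | cons h p ih =>
      simp only [SimpleGraph.Walk.length_cons]
      have := fB_lip b h
      omega

lemma fB_dist {b : Fin 4} {u v : VV ℓ} (h : (GG ℓ).Reachable u v) :
    fB ℓ b v ≤ fB ℓ b u + (GG ℓ).dist u v := by
  obtain ⟨p, hp⟩ := h.exists_walk_length_eq_dist
  rw [← hp]; exact fB_walk p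

/-- projection to the 6-element quotient: `inl b` = star of `y b`, `inr a` = `x a`. -/
def proj (ℓ : ℕ) : VV ℓ → Fin 4 ⊕ Fin 2
  | Sum.inl (Sum.inl a) => Sum.inr a
  | Sum.inl (Sum.inr b) => Sum.inl b
  | Sum.inr (_, b, _) => Sum.inl b

lemma fB_eq_of_proj_ne {b : Fin 4} {v : VV ℓ} (h : proj ℓ v ≠ Sum.inl b) :
    fB ℓ b v = ℓ := by
  rcases v with (a | b') | ⟨a, b', j⟩ <;> simp_all [proj, fB]

lemma proj_adj {u v : VV ℓ} (h : (GG ℓ).Adj u v) :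
    proj ℓ u = proj ℓ v ∨ (proj ℓ u).isLeft ≠ (proj ℓ v).isLeft := by
  rw [SimpleGraph.fromRel_adj] at h
  obtain ⟨hne, h | h⟩ := h <;>
    rcases u with (a | b') | ⟨a, b', j⟩ <;> rcases v with (a2 | b2) | ⟨a2, b2, j2⟩ <;>
    simp_all [subdivK24Rel, proj]

/-- head marker -/
def hd1 {α β : Type*} : List (α ⊕ β) → ℕ
  | (Sum.inl _) :: _ => 1
  | _ => 0

/-- key list counting lemma -/
lemma chain_card {α β : Type*} [DecidableEq α] :
    ∀ L : List (α ⊕ β),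
      L.Chain' (fun u v => u = v ∨ (u.isLeft ≠ v.isLeft)) →
      (L.filterMap Sum.getLeft?).toFinset.card ≤ L.countP Sum.isRight + hd1 L
  | [], _ => by simp
  | (Sum.inr a) :: L, h => by
      have ih := chain_card L h.tail
      have hh : hd1 L ≤ 1 := by
        rcases L with _ | ⟨_ | _, _⟩ <;> simp [hd1]
      simp only [List.filterMap_cons, Sum.getLeft?, List.countP_cons, hd1]
      norm_num
      omega
  | [Sum.inl b], _ => by simp [hd1]
  | (Sum.inl b) :: (Sum.inl b') :: L', h => by
      have hR := (List.isChain_cons_cons.mp h).1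
      have hb : b' = b := by rcases hR with h' | h' <;> simp_all
      have ih := chain_card ((Sum.inl b' : α ⊕ β) :: L') (List.isChain_cons_cons.mp h).2
      rw [hb] at ih ⊢
      simp only [List.filterMap_cons, Sum.getLeft?, List.countP_cons, hd1] at *
      simp only [List.toFinset_cons, Finset.insert_idem] at *
      simpa using ih
  | (Sum.inl b) :: (Sum.inr a) :: L', h => by
      have ih := chain_card ((Sum.inr a : α ⊕ β) :: L') (List.isChain_cons_cons.mp h).2
      have hcard := Finset.card_insert_le b ((List.filterMap Sum.getLeft? L').toFinset)
      simp only [List.filterMap_cons, Sum.getLeft?, List.countP_cons, hd1] at *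
      norm_num at *
      omega
termination_by L => L.length


section Conn

variable {ℓ : ℕ} {T : Set (VV ℓ)} {w : VV ℓ}

lemma iadj {u v : VV ℓ} (hu : u ∈ T) (hv : v ∈ T) (h : (GG ℓ).Adj u v) :
    ((GG ℓ).induce T).Adj ⟨u, hu⟩ ⟨v, hv⟩ := h

lemma reach_down (a : Fin 2) (b : Fin 4) (hx : vX ℓ a ∈ T) :
    ∀ (k : ℕ) (hk : k < ℓ - 1)
      (hz : ∀ j : Fin (ℓ-1), j.val ≤ k → vZ ℓ a b j ∈ T),
      ((GG ℓ).induce T).Reachable ⟨vZ ℓ a b ⟨k, hk⟩, hz _ le_rfl⟩ ⟨vX ℓ a, hx⟩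
  | 0, hk, hz =>
      ((iadj hx (hz _ le_rfl) (adj_XZ a b ⟨0, hk⟩ rfl)).reachable).symm
  | (k+1), hk, hz =>
      ((iadj (hz ⟨k+1, hk⟩ le_rfl) (hz ⟨k, by omega⟩ (by simp))
          ((adj_ZZ a b ⟨k, by omega⟩ ⟨k+1, hk⟩ rfl).symm)).reachable).trans
        (reach_down a b hx k (by omega) (fun j hj => hz j (by omega)))

lemma reach_up (a : Fin 2) (b : Fin 4) (hy : vY ℓ b ∈ T) :
    ∀ (d k : ℕ) (h : k + d + 2 = ℓ)
      (hz : ∀ j : Fin (ℓ-1), k ≤ j.val → vZ ℓ a b j ∈ T),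
      ((GG ℓ).induce T).Reachable ⟨vZ ℓ a b ⟨k, by omega⟩, hz _ le_rfl⟩ ⟨vY ℓ b, hy⟩
  | 0, k, h, hz =>
      (iadj (hz _ le_rfl) hy (adj_ZY a b ⟨k, by omega⟩ (by show k + 1 = ℓ - 1; omega))).reachable
  | (d+1), k, h, hz =>
      ((iadj (hz ⟨k, by omega⟩ le_rfl) (hz ⟨k+1, by omega⟩ (by simp))
          (adj_ZZ a b ⟨k, by omega⟩ ⟨k+1, by omega⟩ rfl)).reachable).trans
        (reach_up a b hy d (k+1) (by omega) (fun j hj => hz j (by omega)))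

lemma reach_XY (hℓ : 1 ≤ ℓ) (a : Fin 2) (b : Fin 4) (hx : vX ℓ a ∈ T) (hy : vY ℓ b ∈ T)
    (hz : ∀ j : Fin (ℓ-1), vZ ℓ a b j ∈ T) :
    ((GG ℓ).induce T).Reachable ⟨vX ℓ a, hx⟩ ⟨vY ℓ b, hy⟩ := by
  rcases eq_or_lt_of_le hℓ with h1 | h2
  · exact (iadj hx hy (adj_XY h1.symm a b)).reachable
  · refine ((iadj hx (hz ⟨0, by omega⟩) (adj_XZ a b ⟨0, by omega⟩ rfl)).reachable).trans ?_
    exact reach_up a b hy (ℓ - 2) 0 (by omega) (fun j _ => hz j)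

lemma fin4_succ_ne : ∀ b : Fin 4, b + 1 ≠ b := by decide

/-- a star index avoided by `w` -/
def avoidB (w : VV ℓ) : Fin 4 :=
  match w with
  | Sum.inl (Sum.inr b') => b' + 1
  | Sum.inr (_, b', _) => b' + 1
  | _ => 0

lemma avoidB_Y (w : VV ℓ) : vY ℓ (avoidB w) ≠ w := by
  rcases w with (a | b') | ⟨a, b', j⟩
  · simp [vY]
  · simp only [avoidB, vY, ne_eq, Sum.inl.injEq, Sum.inr.injEq]
    exact fin4_succ_ne b'
  · simp [vY]

lemma avoidB_Z (w : VV ℓ) (a : Fin 2) (j : Fin (ℓ-1)) : vZ ℓ a (avoidB w) j ≠ w := by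
  rcases w with (a' | b') | ⟨a', b', j'⟩
  · simp [vZ]
  · simp [vZ]
  · simp only [avoidB, vZ, ne_eq, Sum.inr.injEq, Prod.mk.injEq, not_and]
    intro _ hb _
    exact fin4_succ_ne b' hb

variable (hT : ∀ v : VV ℓ, v ≠ w → v ∈ T)
include hT

lemma reach_Y_to_X (hℓ : 1 ≤ ℓ) (b : Fin 4) (hy : vY ℓ b ∈ T) :
    ∃ (a : Fin 2) (hx : vX ℓ a ∈ T),
      ((GG ℓ).induce T).Reachable ⟨vY ℓ b, hy⟩ ⟨vX ℓ a, hx⟩ := by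
  by_cases h0 : vX ℓ 0 ≠ w ∧ ∀ j : Fin (ℓ-1), vZ ℓ 0 b j ≠ w
  · exact ⟨0, hT _ h0.1, (reach_XY hℓ 0 b (hT _ h0.1) hy (fun j => hT _ (h0.2 j))).symm⟩
  · push_neg at h0
    have hx1 : vX ℓ 1 ≠ w := by
      intro he
      by_cases hh : vX ℓ 0 = w
      · rw [← he] at hh; simp [vX] at hh
      · obtain ⟨j, hj⟩ := h0 hh; rw [← he] at hj; simp [vX, vZ] at hj
    have hz1 : ∀ j : Fin (ℓ-1), vZ ℓ 1 b j ≠ w := by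
      intro j he
      by_cases hh : vX ℓ 0 = w
      · rw [← he] at hh; simp [vX, vZ] at hh
      · obtain ⟨j', hj⟩ := h0 hh; rw [← he] at hj
        simp only [vZ, Sum.inr.injEq, Prod.mk.injEq] at hj
        exact absurd hj.1 (by decide)
    exact ⟨1, hT _ hx1, (reach_XY hℓ 1 b (hT _ hx1) hy (fun j => hT _ (hz1 j))).symm⟩

lemma reach_X_X (hℓ : 1 ≤ ℓ) (h0 : vX ℓ 0 ∈ T) (h1 : vX ℓ 1 ∈ T) :
    ((GG ℓ).induce T).Reachable ⟨vX ℓ 0, h0⟩ ⟨vX ℓ 1, h1⟩ := by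
  have hy : vY ℓ (avoidB w) ∈ T := hT _ (avoidB_Y w)
  exact (reach_XY hℓ 0 _ h0 hy (fun j => hT _ (avoidB_Z w 0 j))).trans
    (reach_XY hℓ 1 _ h1 hy (fun j => hT _ (avoidB_Z w 1 j))).symm

lemma reach_to_X (hℓ : 1 ≤ ℓ) (v : VV ℓ) (hv : v ∈ T) :
    ∃ (a : Fin 2) (hx : vX ℓ a ∈ T),
      ((GG ℓ).induce T).Reachable ⟨v, hv⟩ ⟨vX ℓ a, hx⟩ := by
  rcases v with (a | b) | ⟨a, b, k⟩
  · exact ⟨a, hv, SimpleGraph.Reachable.refl _⟩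
  · exact reach_Y_to_X hT hℓ b hv
  · by_cases hd : vX ℓ a ≠ w ∧ ∀ j : Fin (ℓ-1), j.val < k.val → vZ ℓ a b j ≠ w
    · have hz : ∀ j : Fin (ℓ-1), j.val ≤ k.val → vZ ℓ a b j ∈ T := by
        intro j hj
        rcases lt_or_eq_of_le hj with h' | h'
        · exact hT _ (hd.2 j h')
        · have : j = k := Fin.ext h'
          rw [this]; exact hv
      refine ⟨a, hT _ hd.1, ?_⟩
      have := reach_down a b (hT _ hd.1) k.val k.isLt hz
      exact this
    · push_neg at hd
      have hyne : vY ℓ b ≠ w := by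
        intro he
        by_cases hh : vX ℓ a = w
        · rw [← he] at hh; simp [vX, vY] at hh
        · obtain ⟨j, _, hj⟩ := hd hh; rw [← he] at hj; simp [vY, vZ] at hj
      have hzup : ∀ j : Fin (ℓ-1), k.val ≤ j.val → vZ ℓ a b j ∈ T := by
        intro j hj
        refine hT _ ?_
        intro he
        by_cases hh : vX ℓ a = w
        · rw [← he] at hh; simp [vX, vZ] at hh
        · obtain ⟨j', hj', hje⟩ := hd hh; rw [← he] at hje
          simp only [vZ, Sum.inr.injEq, Prod.mk.injEq] at hje
          have : j'.val = j.val := by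
            rcases hje with ⟨-, -, h⟩; exact congrArg Fin.val h
          omega
      have hy : vY ℓ b ∈ T := hT _ hyne
      have hup := reach_up a b hy (ℓ - 2 - k.val) k.val (by have := k.isLt; omega) hzup
      obtain ⟨a', hx', hr'⟩ := reach_Y_to_X hT hℓ b hy
      refine ⟨a', hx', ?_⟩
      exact ((by simpa using hup : ((GG ℓ).induce T).Reachable ⟨vZ ℓ a b k, hv⟩
        ⟨vY ℓ b, hy⟩)).trans hr'

lemma reach_X_X' (hℓ : 1 ≤ ℓ) (a a' : Fin 2) (ha : vX ℓ a ∈ T) (ha' : vX ℓ a' ∈ T) :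
    ((GG ℓ).induce T).Reachable ⟨vX ℓ a, ha⟩ ⟨vX ℓ a', ha'⟩ := by
  have h2 : ∀ x : Fin 2, x = 0 ∨ x = 1 := by decide
  rcases h2 a with rfl | rfl <;> rcases h2 a' with rfl | rfl
  · exact SimpleGraph.Reachable.refl _
  · exact reach_X_X hT hℓ ha ha'
  · exact (reach_X_X hT hℓ ha' ha).symm
  · exact SimpleGraph.Reachable.refl _

lemma induce_connected (hℓ : 1 ≤ ℓ) : ((GG ℓ).induce T).Connected := by
  have hx : ∃ a : Fin 2, vX ℓ a ∈ T := by
    by_cases h : vX ℓ 0 = w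
    · refine ⟨1, hT _ ?_⟩; rw [← h]; simp [vX]
    · exact ⟨0, hT _ h⟩
  obtain ⟨a0, ha0⟩ := hx
  rw [SimpleGraph.connected_iff]
  refine ⟨?_, ⟨⟨vX ℓ a0, ha0⟩⟩⟩
  intro ⟨u, hu⟩ ⟨v, hv⟩
  obtain ⟨a, ha, hra⟩ := reach_to_X hT hℓ u hu
  obtain ⟨a', ha', hra'⟩ := reach_to_X hT hℓ v hv
  exact hra.trans ((reach_X_X' hT hℓ a a' ha ha').trans hra'.symm)

end Conn

lemma GG_connected {ℓ : ℕ} (hℓ : 1 ≤ ℓ) : (GG ℓ).Connected := by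
  have h := induce_connected (T := (Set.univ : Set (VV ℓ))) (w := vX ℓ 0)
    (fun v _ => Set.mem_univ v) hℓ
  exact ((GG ℓ).induceUnivIso).connected_iff.mp h

section Lower

variable {ℓ : ℕ}

lemma isX_cases {x : VV ℓ} (h : (proj ℓ x).isRight = true) : x = vX ℓ 0 ∨ x = vX ℓ 1 := by
  rcases x with (a | b) | ⟨a, b, j⟩ <;> simp_all [proj, vX]
  have : a = 0 ∨ a = 1 := by omega
  rcases this with rfl | rfl <;> simp

lemma exists_untouched {u v : VV ℓ} (P : (GG ℓ).Walk u v) (hP : P.IsPath) :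
    ∃ b : Fin 4, ∀ x ∈ P.support, proj ℓ x ≠ Sum.inl b := by
  set L : List (Fin 4 ⊕ Fin 2) := P.support.map (proj ℓ) with hL
  have hchain : List.Chain' (fun (u v : Fin 4 ⊕ Fin 2) => u = v ∨ (u.isLeft ≠ v.isLeft)) L :=
    List.isChain_map_of_isChain (S := fun (u v : Fin 4 ⊕ Fin 2) => u = v ∨ (u.isLeft ≠ v.isLeft)) (proj ℓ) (fun a b h => proj_adj h) P.isChain_adj_support
  have hcount : L.countP Sum.isRight ≤ 2 := by
    rw [hL, List.countP_map, List.countP_eq_length_filter]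
    set l := P.support.filter (Sum.isRight ∘ proj ℓ) with hl
    have hnd : l.Nodup := hP.support_nodup.filter _
    have hsub : l.toFinset ⊆ {vX ℓ 0, vX ℓ 1} := by
      intro x hx
      rw [List.mem_toFinset, hl, List.mem_filter] at hx
      have := isX_cases (ℓ := ℓ) (x := x) (by simpa using hx.2)
      simpa using this
    have h1 : l.toFinset.card = l.length := List.toFinset_card_of_nodup hnd
    have h2 : ({vX ℓ 0, vX ℓ 1} : Finset (VV ℓ)).card ≤ 2 :=
      le_trans (Finset.card_insert_le _ _) (by simp)
    have := Finset.card_le_card hsub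
    omega
  have hcard : (L.filterMap Sum.getLeft?).toFinset.card ≤ 3 := by
    have := chain_card L hchain
    have hh : hd1 L ≤ 1 := by
      rcases L with _ | ⟨_ | _, _⟩ <;> simp [hd1]
    omega
  have : ∃ b : Fin 4, b ∉ (L.filterMap Sum.getLeft?).toFinset := by
    by_contra hcon
    push_neg at hcon
    have hsub : (Finset.univ : Finset (Fin 4)) ⊆ (L.filterMap Sum.getLeft?).toFinset :=
      fun b _ => hcon b
    have := Finset.card_le_card hsub
    simp at this
    omega
  obtain ⟨b, hb⟩ := this
  refine ⟨b, fun x hx he => hb ?_⟩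
  rw [List.mem_toFinset, List.mem_filterMap]
  exact ⟨Sum.inl b, by rw [← he]; exact List.mem_map_of_mem hx, rfl⟩

lemma star_far (hℓ : 1 ≤ ℓ) {b : Fin 4} {x : VV ℓ} (hx : proj ℓ x ≠ Sum.inl b) :
    ℓ ≤ (GG ℓ).dist (vY ℓ b) x := by
  have hreach : (GG ℓ).Reachable (vY ℓ b) x := (GG_connected hℓ).preconnected _ _
  have h1 := fB_dist (b := b) hreach
  rw [fB_eq_of_proj_ne hx] at h1
  have h2 : fB ℓ b (vY ℓ b) = 0 := by simp [fB, vY]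
  omega

lemma eccW_lower (hℓ : 1 ≤ ℓ) {u v : VV ℓ} (P : (GG ℓ).Walk u v) (hP : P.IsPath) :
    ℓ ≤ eccW (GG ℓ) P := by
  obtain ⟨b, hb⟩ := exists_untouched P hP
  have h1 : ℓ ≤ walkDist (GG ℓ) P (vY ℓ b) := by
    apply Finset.le_inf'
    intro x hx
    exact star_far hℓ (hb x (List.mem_toFinset.mp hx))
  exact le_trans h1 (Finset.le_sup (Finset.mem_univ _))

end Lower

section Upper

open SimpleGraph Walk

variable {ℓ : ℕ}

def zxWalk (a : Fin 2) (b : Fin 4) :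
    ∀ (k : ℕ) (hk : k < ℓ - 1), (GG ℓ).Walk (vZ ℓ a b ⟨k, hk⟩) (vX ℓ a)
  | 0, hk => Walk.cons ((adj_XZ a b ⟨0, hk⟩ rfl).symm) Walk.nil
  | (k+1), hk =>
      Walk.cons ((adj_ZZ a b ⟨k, by omega⟩ ⟨k+1, hk⟩ rfl).symm) (zxWalk a b k (by omega))

lemma zxWalk_length (a : Fin 2) (b : Fin 4) :
    ∀ (k : ℕ) (hk : k < ℓ - 1), (zxWalk a b k hk).length = k + 1
  | 0, hk => rfl
  | (k+1), hk => by
      show (zxWalk a b k _).length + 1 = k + 2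
      rw [zxWalk_length a b k]

lemma zxWalk_support (a : Fin 2) (b : Fin 4) :
    ∀ (k : ℕ) (hk : k < ℓ - 1) (x : VV ℓ),
      x ∈ (zxWalk a b k hk).support ↔
        x = vX ℓ a ∨ ∃ j : Fin (ℓ-1), j.val ≤ k ∧ x = vZ ℓ a b j
  | 0, hk, x => by
      simp only [zxWalk, Walk.support_cons, Walk.support_nil,
        List.mem_cons, List.mem_singleton]
      constructor
      · rintro (rfl | (rfl | h))
        · exact Or.inr ⟨⟨0, hk⟩, le_rfl, rfl⟩
        · exact Or.inl rfl
        · simp at h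
      · rintro (rfl | ⟨j, hj, rfl⟩)
        · exact Or.inr (Or.inl rfl)
        · left
          congr 1
          exact Fin.ext (show j.val = 0 by omega)
  | (k+1), hk, x => by
      simp only [zxWalk, Walk.support_cons, List.mem_cons]
      rw [zxWalk_support a b k (by omega) x]
      constructor
      · rintro (rfl | (rfl | ⟨j, hj, rfl⟩))
        · exact Or.inr ⟨⟨k+1, hk⟩, le_rfl, rfl⟩
        · exact Or.inl rfl
        · exact Or.inr ⟨j, by omega, rfl⟩
      · rintro (rfl | ⟨j, hj, rfl⟩)
        · exact Or.inr (Or.inl rfl)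
        · rcases Nat.lt_or_ge j.val (k+1) with h' | h'
          · exact Or.inr (Or.inr ⟨j, by omega, rfl⟩)
          · left
            congr 1
            exact Fin.ext (show j.val = k + 1 by omega)

lemma zxWalk_nodup (a : Fin 2) (b : Fin 4) :
    ∀ (k : ℕ) (hk : k < ℓ - 1), (zxWalk a b k hk).support.Nodup
  | 0, hk => by simp only [zxWalk, Walk.support_cons, Walk.support_nil]; simp [vZ, vX]
  | (k+1), hk => by
      have ih := zxWalk_nodup a b k (Nat.lt_of_succ_lt hk)
      simp only [zxWalk, Walk.support_cons, List.nodup_cons]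
      refine ⟨?_, ih⟩
      rw [zxWalk_support a b k (by omega)]
      rintro (h | ⟨j, hj, h⟩)
      · simp [vZ, vX] at h
      · simp only [vZ, Sum.inr.injEq, Prod.mk.injEq] at h
        have := congrArg Fin.val h.2.2
        simp at this
        omega

def yxWalk (hℓ : 1 ≤ ℓ) (a : Fin 2) (b : Fin 4) : (GG ℓ).Walk (vY ℓ b) (vX ℓ a) :=
  if h : ℓ = 1 then Walk.cons ((adj_XY h a b).symm) Walk.nil
  else Walk.cons ((adj_ZY a b ⟨ℓ-2, by omega⟩ (show ℓ - 2 + 1 = ℓ - 1 by omega)).symm)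
    (zxWalk a b (ℓ-2) (by omega))

lemma yxWalk_length (hℓ : 1 ≤ ℓ) (a : Fin 2) (b : Fin 4) :
    (yxWalk hℓ a b).length = ℓ := by
  rw [yxWalk]
  split
  · simp; omega
  · simp [zxWalk_length]; omega

lemma yxWalk_support (hℓ : 1 ≤ ℓ) (a : Fin 2) (b : Fin 4) (x : VV ℓ) :
    x ∈ (yxWalk hℓ a b).support ↔
      x = vY ℓ b ∨ x = vX ℓ a ∨ ∃ j : Fin (ℓ-1), x = vZ ℓ a b j := by
  rw [yxWalk]
  split
  · rename_i h
    subst h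
    simp only [Walk.support_cons, Walk.support_nil, List.mem_cons, List.mem_singleton]
    constructor
    · rintro (rfl | (rfl | h)) <;> simp_all
      
    · rintro (rfl | (rfl | ⟨j, rfl⟩))
      · simp
      · simp
      · exact absurd j.isLt (by omega)
  · simp only [Walk.support_cons, List.mem_cons]
    rw [zxWalk_support]
    constructor
    · rintro (rfl | (rfl | ⟨j, hj, rfl⟩))
      · exact Or.inl rfl
      · exact Or.inr (Or.inl rfl)
      · exact Or.inr (Or.inr ⟨j, rfl⟩)
    · rintro (rfl | (rfl | ⟨j, rfl⟩))
      · exact Or.inl rfl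
      · exact Or.inr (Or.inl rfl)
      · exact Or.inr (Or.inr ⟨j, by have := j.isLt; omega, rfl⟩)

lemma yxWalk_nodup (hℓ : 1 ≤ ℓ) (a : Fin 2) (b : Fin 4) :
    (yxWalk hℓ a b).support.Nodup := by
  rw [yxWalk]
  split
  · simp only [Walk.support_cons, Walk.support_nil]; simp [vY, vX]
  · simp only [Walk.support_cons, List.nodup_cons]
    refine ⟨?_, zxWalk_nodup a b _ _⟩
    rw [zxWalk_support]
    rintro (h | ⟨j, hj, h⟩) <;> simp [vY, vX, vZ] at h

/-- the central path `X0 – Y0 – X1` -/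
def cPath (hℓ : 1 ≤ ℓ) : (GG ℓ).Walk (vX ℓ 0) (vX ℓ 1) :=
  (yxWalk hℓ 0 0).reverse.append (yxWalk hℓ 1 0)

lemma cPath_isPath (hℓ : 1 ≤ ℓ) : (cPath hℓ).IsPath := by
  rw [Walk.isPath_def, cPath, Walk.support_append, List.nodup_append]
  have h1 : (yxWalk hℓ 0 0).reverse.support.Nodup := by
    rw [Walk.support_reverse]
    exact List.nodup_reverse.mpr (yxWalk_nodup hℓ 0 0)
  have hcons : (yxWalk hℓ 1 0).support = vY ℓ 0 :: (yxWalk hℓ 1 0).support.tail :=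
    Walk.support_eq_cons _
  have h2nd : (yxWalk hℓ 1 0).support.Nodup := yxWalk_nodup hℓ 1 0
  have h2 : (yxWalk hℓ 1 0).support.tail.Nodup := by
    rw [hcons] at h2nd
    exact (List.nodup_cons.mp h2nd).2
  have hy : vY ℓ 0 ∉ (yxWalk hℓ 1 0).support.tail := by
    rw [hcons] at h2nd
    exact (List.nodup_cons.mp h2nd).1
  refine ⟨h1, h2, ?_⟩
  intro x hx1 y hx2 hxy
  subst hxy
  have hx1' : x ∈ (yxWalk hℓ 0 0).support := by
    rw [Walk.support_reverse, List.mem_reverse] at hx1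
    exact hx1
  have hx2' : x ∈ (yxWalk hℓ 1 0).support := List.mem_of_mem_tail hx2
  rw [yxWalk_support] at hx1' hx2'
  rcases hx1' with rfl | (rfl | ⟨j, rfl⟩) <;> rcases hx2' with h | (h | ⟨j', h⟩)
  · exact hy hx2
  · simp [vY, vX] at h
  · simp [vY, vZ] at h
  · simp [vY, vX] at h
  · simp [vX] at h
  · simp [vX, vZ] at h
  · simp [vY, vZ] at h
  · simp [vX, vZ] at h
  · simp only [vZ, Sum.inr.injEq, Prod.mk.injEq] at h
    exact absurd h.1 (by decide)

lemma vX_mem_cPath (hℓ : 1 ≤ ℓ) (a : Fin 2) : vX ℓ a ∈ (cPath hℓ).support := by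
  have h2 : a = 0 ∨ a = 1 := by omega
  rcases h2 with rfl | rfl
  · exact Walk.start_mem_support _
  · exact Walk.end_mem_support _

lemma eccW_upper (hℓ : 1 ≤ ℓ) : eccW (GG ℓ) (cPath hℓ) ≤ ℓ := by
  apply Finset.sup_le
  intro u _
  rcases u with (a | b) | ⟨a, b, j⟩
  · refine le_trans (Finset.inf'_le _ (List.mem_toFinset.mpr (vX_mem_cPath hℓ a))) ?_
    show (GG ℓ).dist (vX ℓ a) (vX ℓ a) ≤ ℓ
    simp [SimpleGraph.dist_self]
  · refine le_trans (Finset.inf'_le _ (List.mem_toFinset.mpr (vX_mem_cPath hℓ 0))) ?_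
    show (GG ℓ).dist (vY ℓ b) (vX ℓ 0) ≤ ℓ
    have := SimpleGraph.dist_le (yxWalk hℓ 0 b)
    rwa [yxWalk_length] at this
  · refine le_trans (Finset.inf'_le _ (List.mem_toFinset.mpr (vX_mem_cPath hℓ a))) ?_
    show (GG ℓ).dist (vZ ℓ a b j) (vX ℓ a) ≤ ℓ
    have h1 := SimpleGraph.dist_le (zxWalk a b j.val j.isLt)
    rw [zxWalk_length] at h1
    have h2 : (⟨j.val, j.isLt⟩ : Fin (ℓ-1)) = j := Fin.ext rfl
    rw [h2] at h1
    have := j.isLt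
    omega

lemma pe_eq (hℓ : 1 ≤ ℓ) : pe (GG ℓ) = ℓ := by
  have hecc : eccW (GG ℓ) (cPath hℓ) = ℓ :=
    le_antisymm (eccW_upper hℓ) (eccW_lower hℓ _ (cPath_isPath hℓ))
  have hmem : ℓ ∈ {m | ∃ (a b : VV ℓ) (P : (GG ℓ).Walk a b), P.IsPath ∧ eccW (GG ℓ) P = m} :=
    ⟨_, _, cPath hℓ, cPath_isPath hℓ, hecc⟩
  refine le_antisymm (Nat.sInf_le hmem) ?_
  apply le_csInf ⟨ℓ, hmem⟩
  rintro m ⟨a, b, Q, hQ, rfl⟩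
  exact eccW_lower hℓ Q hQ

lemma card_VV (hℓ : 1 ≤ ℓ) : Fintype.card (VV ℓ) = 8 * ℓ - 2 := by
  simp only [VV, Fintype.card_sum, Fintype.card_prod, Fintype.card_fin]
  omega

lemma kconn (hℓ : 1 ≤ ℓ) : KConnected 2 (GG ℓ) := by
  constructor
  · rw [card_VV hℓ]; omega
  · intro S hS
    have hS1 : S.card ≤ 1 := by omega
    have : ∃ w : VV ℓ, ∀ v : VV ℓ, v ≠ w → v ∈ ((↑S : Set (VV ℓ))ᶜ) := by
      rcases Finset.eq_empty_or_nonempty S with rfl | ⟨w, hw⟩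
      · exact ⟨vX ℓ 0, fun v _ => by simp⟩
      · refine ⟨w, fun v hv => ?_⟩
        simp only [Set.mem_compl_iff, Finset.coe_mem, Finset.mem_coe]
        intro hvS
        exact hv (Finset.card_le_one.mp hS1 v hvS w hw)
    obtain ⟨w, hw⟩ := this
    exact induce_connected hw hℓ

end Upper

end K24

theorem stmt10 (ℓ : ℕ) (hℓ : 1 ≤ ℓ) :
    KConnected 2 (SimpleGraph.fromRel (subdivK24Rel ℓ)) ∧
    Fintype.card ((Fin 2 ⊕ Fin 4) ⊕ (Fin 2 × Fin 4 × Fin (ℓ - 1))) = 8 * ℓ - 2 ∧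
    pe (SimpleGraph.fromRel (subdivK24Rel ℓ)) = ℓ ∧
    (pe (SimpleGraph.fromRel (subdivK24Rel ℓ)) : ℝ) =
      ((Fintype.card ((Fin 2 ⊕ Fin 4) ⊕ (Fin 2 × Fin 4 × Fin (ℓ - 1))) : ℝ) + 2) / 8 := by
  refine ⟨K24.kconn hℓ, K24.card_VV hℓ, K24.pe_eq hℓ, ?_⟩
  rw [K24.pe_eq hℓ, K24.card_VV hℓ]
  have h2 : (2 : ℕ) ≤ 8 * ℓ := by omega
  rw [Nat.cast_sub h2]
  push_cast
  ring
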